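/- With the notation of the previous statement, Σ_{n=1}^{∞} (tⁿ/n!)·‖Gₙ - Fₙ - H′ₙ‖ ≤ ‖O‖ · e^{2t‖H‖} · (e^{2t‖H′‖} - 1 - 2t‖H′‖) for t ≥ 0. -/

import Mathlib

open Matrix NormedSpace ComplexOrder

noncomputable def opNorm {n : ℕ} (A : Matrix (Fin n) (Fin n) ℂ) : ℝ :=
  ‖(Matrix.toEuclideanCLM (𝕜 := ℂ) A : EuclideanSpace ℂ (Fin n) →L[ℂ] EuclideanSpace ℂ (Fin n))‖

noncomputable def traceNorm {n : ℕ} (A : Matrix (Fin n) (Fin n) ℂ) : ℝ :=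
  (((Matrix.posSemidef_conjTranspose_mul_self A).1.eigenvectorUnitary.1 *
    diagonal ((fun x : ℝ => (x : ℂ)) ∘ (√·) ∘ (Matrix.posSemidef_conjTranspose_mul_self A).1.eigenvalues) *
    (star (Matrix.posSemidef_conjTranspose_mul_self A).1.eigenvectorUnitary : Matrix (Fin n) (Fin n) ℂ)).trace).re

def IsDensity {n : ℕ} (ρ : Matrix (Fin n) (Fin n) ℂ) : Prop := ρ.PosSemidef ∧ ρ.trace = 1

/-- Left adjoint action: ad_H(X) = [H, X]. -/
noncomputable def adL {n : ℕ} (H : Matrix (Fin n) (Fin n) ℂ) : Matrix (Fin n) (Fin n) ℂ → Matrix (Fin n) (Fin n) ℂ :=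
  fun X => H * X - X * H

/-- Right-nesting action: X ↦ [X, H]. -/
noncomputable def adR {n : ℕ} (H : Matrix (Fin n) (Fin n) ℂ) : Matrix (Fin n) (Fin n) ℂ → Matrix (Fin n) (Fin n) ℂ :=
  fun X => X * H - H * X

section Aux

variable {n : ℕ}

lemma opNorm_nonneg' (A : Matrix (Fin n) (Fin n) ℂ) : 0 ≤ opNorm A := norm_nonneg _

lemma opNorm_zero' : opNorm (0 : Matrix (Fin n) (Fin n) ℂ) = 0 := by
  unfold opNorm; rw [map_zero]; exact norm_zero

lemma opNorm_mul_le' (A B : Matrix (Fin n) (Fin n) ℂ) :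
    opNorm (A * B) ≤ opNorm A * opNorm B := by
  unfold opNorm; rw [_root_.map_mul]; exact norm_mul_le _ _

lemma opNorm_sub_le' (A B : Matrix (Fin n) (Fin n) ℂ) :
    opNorm (A - B) ≤ opNorm A + opNorm B := by
  unfold opNorm; rw [map_sub]; exact norm_sub_le _ _

lemma opNorm_add_le' (A B : Matrix (Fin n) (Fin n) ℂ) :
    opNorm (A + B) ≤ opNorm A + opNorm B := by
  unfold opNorm; rw [map_add]; exact norm_add_le _ _

lemma opNorm_sum_le' {ι : Type*} (s : Finset ι) (f : ι → Matrix (Fin n) (Fin n) ℂ) :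
    opNorm (∑ i ∈ s, f i) ≤ ∑ i ∈ s, opNorm (f i) := by
  unfold opNorm; rw [map_sum]; exact norm_sum_le _ _

lemma opNorm_comm_le (X Y : Matrix (Fin n) (Fin n) ℂ) :
    opNorm (X * Y - Y * X) ≤ 2 * opNorm X * opNorm Y :=
  calc opNorm (X * Y - Y * X) ≤ opNorm (X * Y) + opNorm (Y * X) := opNorm_sub_le' _ _
  _ ≤ opNorm X * opNorm Y + opNorm Y * opNorm X :=
      add_le_add (opNorm_mul_le' _ _) (opNorm_mul_le' _ _)
  _ = 2 * opNorm X * opNorm Y := by ring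

lemma opNorm_adL_le (H X : Matrix (Fin n) (Fin n) ℂ) :
    opNorm (adL H X) ≤ 2 * opNorm H * opNorm X := opNorm_comm_le H X

lemma opNorm_adL_iter_le (H X : Matrix (Fin n) (Fin n) ℂ) (l : ℕ) :
    opNorm ((adL H)^[l] X) ≤ (2 * opNorm H) ^ l * opNorm X := by
  induction l with
  | zero => simp
  | succ l ih =>
    rw [Function.iterate_succ_apply']
    calc opNorm (adL H ((adL H)^[l] X)) ≤ 2 * opNorm H * opNorm ((adL H)^[l] X) :=
          opNorm_adL_le _ _
    _ ≤ 2 * opNorm H * ((2 * opNorm H) ^ l * opNorm X) := by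
        apply mul_le_mul_of_nonneg_left ih
        exact mul_nonneg (by norm_num) (opNorm_nonneg' _)
    _ = (2 * opNorm H) ^ (l + 1) * opNorm X := by ring

/-- The correction term H′_N. -/
noncomputable def Hp (H H' O : Matrix (Fin n) (Fin n) ℂ) (N : ℕ) : Matrix (Fin n) (Fin n) ℂ :=
  ∑ l ∈ Finset.range N,
    (adL H)^[l] (H' * ((adL H)^[N - 1 - l] O) - ((adL H)^[N - 1 - l] O) * H')

lemma adL_sum {ι : Type*} (H : Matrix (Fin n) (Fin n) ℂ) (s : Finset ι)
    (f : ι → Matrix (Fin n) (Fin n) ℂ) :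
    adL H (∑ i ∈ s, f i) = ∑ i ∈ s, adL H (f i) := by
  simp [adL, Finset.mul_sum, Finset.sum_mul, Finset.sum_sub_distrib]

lemma Hp_succ (H H' O : Matrix (Fin n) (Fin n) ℂ) (N : ℕ) :
    Hp H H' O (N + 1) =
      adL H (Hp H H' O N) + (H' * ((adL H)^[N] O) - ((adL H)^[N] O) * H') := by
  unfold Hp
  rw [Finset.sum_range_succ', adL_sum]
  congr 1
  · apply Finset.sum_congr rfl
    intro l _
    have h : N + 1 - 1 - (l + 1) = N - 1 - l := by omega
    rw [h, Function.iterate_succ_apply']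

lemma opNorm_Hp_le (H H' O : Matrix (Fin n) (Fin n) ℂ) (N : ℕ) :
    opNorm (Hp H H' O N) ≤
      (N : ℝ) * (2 * opNorm H') * (2 * opNorm H) ^ (N - 1) * opNorm O := by
  set a := opNorm H
  set b := opNorm H'
  set c := opNorm O
  have ha : 0 ≤ a := opNorm_nonneg' _
  have hb : 0 ≤ b := opNorm_nonneg' _
  calc opNorm (Hp H H' O N)
      ≤ ∑ l ∈ Finset.range N,
          opNorm ((adL H)^[l] (H' * ((adL H)^[N - 1 - l] O) - ((adL H)^[N - 1 - l] O) * H')) :=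
        opNorm_sum_le' _ _
    _ ≤ ∑ l ∈ Finset.range N, (2 * b) * (2 * a) ^ (N - 1) * c := by
        apply Finset.sum_le_sum
        intro l hl
        have hl' : l < N := Finset.mem_range.mp hl
        calc opNorm ((adL H)^[l] (H' * ((adL H)^[N - 1 - l] O) - ((adL H)^[N - 1 - l] O) * H'))
            ≤ (2 * a) ^ l *
                opNorm (H' * ((adL H)^[N - 1 - l] O) - ((adL H)^[N - 1 - l] O) * H') :=
              opNorm_adL_iter_le _ _ _
          _ ≤ (2 * a) ^ l * (2 * b * opNorm ((adL H)^[N - 1 - l] O)) := by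
              apply mul_le_mul_of_nonneg_left (opNorm_comm_le _ _)
              positivity
          _ ≤ (2 * a) ^ l * (2 * b * ((2 * a) ^ (N - 1 - l) * c)) := by
              apply mul_le_mul_of_nonneg_left _ (by positivity)
              apply mul_le_mul_of_nonneg_left (opNorm_adL_iter_le _ _ _) (by positivity)
          _ = (2 * b) * (2 * a) ^ (l + (N - 1 - l)) * c := by rw [pow_add]; ring
          _ = (2 * b) * (2 * a) ^ (N - 1) * c := by
              rw [show l + (N - 1 - l) = N - 1 from by omega]
    _ = (N : ℝ) * (2 * b) * (2 * a) ^ (N - 1) * c := by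
        rw [Finset.sum_const, Finset.card_range, nsmul_eq_mul]
        ring

end Aux

/-- Σ_{N≥1} (t^N/N!)·‖G_N - F_N - H′_N‖ ≤ ‖O‖ e^{2t‖H‖}(e^{2t‖H′‖} - 1 - 2t‖H′‖)
for t ≥ 0.  (The N = 0 term of the series below vanishes, since G₀ - F₀ - H′₀ = 0.) -/
theorem stmt12 {n : ℕ} (H H' O : Matrix (Fin n) (Fin n) ℂ) (t : ℝ) (ht : 0 ≤ t)
    (F G : ℕ → Matrix (Fin n) (Fin n) ℂ)
    (hF0 : F 0 = O) (hFs : ∀ k, F (k + 1) = H * F k - F k * H)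
    (hG0 : G 0 = O) (hGs : ∀ k, G (k + 1) = (H + H') * G k - G k * (H + H')) :
    ∑' N : ℕ, (t ^ N / (Nat.factorial N : ℝ)) *
        opNorm (G N - F N -
          ∑ l ∈ Finset.range N,
            (adL H)^[l] (H' * ((adL H)^[N - 1 - l] O) - ((adL H)^[N - 1 - l] O) * H'))
      ≤ opNorm O * Real.exp (2 * t * opNorm H) *
          (Real.exp (2 * t * opNorm H') - 1 - 2 * t * opNorm H') := by
  have hHp : ∀ N : ℕ, (∑ l ∈ Finset.range N,
      (adL H)^[l] (H' * ((adL H)^[N - 1 - l] O) - ((adL H)^[N - 1 - l] O) * H'))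
      = Hp H H' O N := fun N => rfl
  simp only [hHp]
  set a := opNorm H with ha_def
  set b := opNorm H' with hb_def
  set c := opNorm O with hc_def
  have ha : 0 ≤ a := opNorm_nonneg' _
  have hb : 0 ≤ b := opNorm_nonneg' _
  have hc : 0 ≤ c := opNorm_nonneg' _
  have hab : opNorm (H + H') ≤ a + b := opNorm_add_le' _ _
  -- F N = ad_H^N O
  have hFiter : ∀ N, F N = (adL H)^[N] O := by
    intro N
    induction N with
    | zero => simpa using hF0
    | succ N ih => rw [hFs, Function.iterate_succ_apply', ih]; rfl
  -- key pointwise bound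
  have key : ∀ N : ℕ, opNorm (G N - F N - Hp H H' O N) ≤
      c * 2 ^ N * ((a + b) ^ N - a ^ N - (N : ℝ) * b * a ^ (N - 1)) := by
    intro N
    induction N with
    | zero =>
      simp [hF0, hG0, Hp, opNorm_zero']
    | succ N ih =>
      have hrec : G (N + 1) - F (N + 1) - Hp H H' O (N + 1) =
          ((H + H') * (G N - F N - Hp H H' O N) - (G N - F N - Hp H H' O N) * (H + H'))
            + (H' * Hp H H' O N - Hp H H' O N * H') := by
        rw [hGs, hFs, Hp_succ, ← hFiter]
        show _ = _
        simp only [adL]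
        noncomm_ring
      have h1 : opNorm (G (N + 1) - F (N + 1) - Hp H H' O (N + 1)) ≤
          2 * (a + b) * opNorm (G N - F N - Hp H H' O N)
            + 2 * b * opNorm (Hp H H' O N) := by
        rw [hrec]
        calc opNorm _ ≤
            opNorm ((H + H') * (G N - F N - Hp H H' O N) - (G N - F N - Hp H H' O N) * (H + H'))
              + opNorm (H' * Hp H H' O N - Hp H H' O N * H') := opNorm_add_le' _ _
          _ ≤ 2 * opNorm (H + H') * opNorm (G N - F N - Hp H H' O N)
              + 2 * b * opNorm (Hp H H' O N) :=
            add_le_add (opNorm_comm_le _ _) (opNorm_comm_le _ _)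
          _ ≤ 2 * (a + b) * opNorm (G N - F N - Hp H H' O N)
              + 2 * b * opNorm (Hp H H' O N) := by
            refine add_le_add ?_ le_rfl
            apply mul_le_mul_of_nonneg_right _ (opNorm_nonneg' _)
            nlinarith
      have h2 : 2 * (a + b) * opNorm (G N - F N - Hp H H' O N)
          ≤ 2 * (a + b) * (c * 2 ^ N * ((a + b) ^ N - a ^ N - (N : ℝ) * b * a ^ (N - 1))) := by
        apply mul_le_mul_of_nonneg_left ih
        nlinarith
      have h3 : 2 * b * opNorm (Hp H H' O N)
          ≤ 2 * b * ((N : ℝ) * (2 * b) * (2 * a) ^ (N - 1) * c) := by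
        apply mul_le_mul_of_nonneg_left (opNorm_Hp_le H H' O N)
        nlinarith
      have heq : 2 * (a + b) * (c * 2 ^ N * ((a + b) ^ N - a ^ N - (N : ℝ) * b * a ^ (N - 1)))
          + 2 * b * ((N : ℝ) * (2 * b) * (2 * a) ^ (N - 1) * c)
          = c * 2 ^ (N + 1) * ((a + b) ^ (N + 1) - a ^ (N + 1) - ((N : ℝ) + 1) * b * a ^ N) := by
        rcases N with _ | M
        · norm_num
        · have h1' : M + 1 - 1 = M := rfl
          rw [h1']
          push_cast
          ring
      calc opNorm (G (N + 1) - F (N + 1) - Hp H H' O (N + 1)) ≤ _ := h1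
        _ ≤ 2 * (a + b) * (c * 2 ^ N * ((a + b) ^ N - a ^ N - (N : ℝ) * b * a ^ (N - 1)))
            + 2 * b * ((N : ℝ) * (2 * b) * (2 * a) ^ (N - 1) * c) := add_le_add h2 h3
        _ = c * 2 ^ (N + 1) * ((a + b) ^ (N + 1) - a ^ (N + 1) - ((N : ℝ) + 1) * b * a ^ N) :=
            heq
        _ = c * 2 ^ (N + 1) * ((a + b) ^ (N + 1) - a ^ (N + 1)
              - ((N + 1 : ℕ) : ℝ) * b * a ^ (N + 1 - 1)) := by push_cast; ring_nf
  -- series comparison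
  set v1 : ℕ → ℝ := fun N => c * ((2 * t * (a + b)) ^ N / (Nat.factorial N : ℝ)) with hv1_def
  set v2 : ℕ → ℝ := fun N => c * ((2 * t * a) ^ N / (Nat.factorial N : ℝ)) with hv2_def
  set v3 : ℕ → ℝ := fun N =>
      c * ((N : ℝ) * b * 2 ^ N * a ^ (N - 1) * t ^ N / (Nat.factorial N : ℝ)) with hv3_def
  have hexp : ∀ x : ℝ, (∑' N : ℕ, x ^ N / (Nat.factorial N : ℝ)) = Real.exp x := by
    intro x
    rw [Real.exp_eq_exp_ℝ, NormedSpace.exp_eq_tsum_div]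
  have hsum_exp : ∀ x : ℝ, Summable (fun N : ℕ => x ^ N / (Nat.factorial N : ℝ)) :=
    Real.summable_pow_div_factorial
  have hv1sum : Summable v1 := (hsum_exp _).mul_left c
  have hv2sum : Summable v2 := (hsum_exp _).mul_left c
  have hv3shift : ∀ N : ℕ, v3 (N + 1) = (2 * t * b * c) * ((2 * t * a) ^ N / (Nat.factorial N : ℝ)) := by
    intro N
    have hfac : ((N + 1).factorial : ℝ) = ((N : ℝ) + 1) * (Nat.factorial N : ℝ) := by
      rw [Nat.factorial_succ]; push_cast; ring
    have hne : ((N : ℝ) + 1) ≠ 0 := by positivity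
    have hfne : (Nat.factorial N : ℝ) ≠ 0 := by
      exact_mod_cast Nat.factorial_ne_zero N
    simp only [hv3_def, Nat.add_sub_cancel, hfac]
    push_cast
    rw [mul_pow, mul_pow]
    field_simp
    ring
  have hv3sum : Summable v3 := by
    rw [← summable_nat_add_iff 1]
    simp only [hv3shift]
    exact (hsum_exp _).mul_left _
  have hv3tsum : ∑' N, v3 N = 2 * t * b * c * Real.exp (2 * t * a) := by
    rw [Summable.tsum_eq_zero_add hv3sum]
    have h0 : v3 0 = 0 := by simp [hv3_def]
    simp only [hv3shift, h0, zero_add]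
    rw [tsum_mul_left, hexp]
  have husum : Summable (fun N => v1 N - v2 N - v3 N) := (hv1sum.sub hv2sum).sub hv3sum
  have hterm_le : ∀ N : ℕ, (t ^ N / (Nat.factorial N : ℝ)) * opNorm (G N - F N - Hp H H' O N)
      ≤ v1 N - v2 N - v3 N := by
    intro N
    have hpos : 0 ≤ t ^ N / (Nat.factorial N : ℝ) := by positivity
    have := mul_le_mul_of_nonneg_left (key N) hpos
    refine this.trans_eq ?_
    simp only [hv1_def, hv2_def, hv3_def]
    rw [mul_pow, mul_pow, mul_pow, mul_pow]
    have hfne : (Nat.factorial N : ℝ) ≠ 0 := by exact_mod_cast Nat.factorial_ne_zero N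
    field_simp
  have hterm_nonneg : ∀ N : ℕ,
      0 ≤ (t ^ N / (Nat.factorial N : ℝ)) * opNorm (G N - F N - Hp H H' O N) := by
    intro N
    have : 0 ≤ t ^ N / (Nat.factorial N : ℝ) := by positivity
    exact mul_nonneg this (opNorm_nonneg' _)
  have htermsum : Summable (fun N : ℕ =>
      (t ^ N / (Nat.factorial N : ℝ)) * opNorm (G N - F N - Hp H H' O N)) :=
    Summable.of_nonneg_of_le hterm_nonneg hterm_le husum
  calc ∑' N : ℕ, (t ^ N / (Nat.factorial N : ℝ)) * opNorm (G N - F N - Hp H H' O N)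
      ≤ ∑' N, (v1 N - v2 N - v3 N) := Summable.tsum_le_tsum hterm_le htermsum husum
    _ = (∑' N, v1 N) - (∑' N, v2 N) - (∑' N, v3 N) := by
        rw [Summable.tsum_sub (hv1sum.sub hv2sum) hv3sum, Summable.tsum_sub hv1sum hv2sum]
    _ = c * Real.exp (2 * t * (a + b)) - c * Real.exp (2 * t * a)
          - 2 * t * b * c * Real.exp (2 * t * a) := by
        rw [hv3tsum]
        simp only [hv1_def, hv2_def]
        rw [tsum_mul_left, tsum_mul_left, hexp, hexp]
    _ = c * Real.exp (2 * t * a) * (Real.exp (2 * t * b) - 1 - 2 * t * b) := by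
        have : 2 * t * (a + b) = 2 * t * a + 2 * t * b := by ring
        rw [this, Real.exp_add]
        ring
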